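/- arXiv:1409.5691 — 8 statements merged into one kernel-verified Lean document; each statement's English description precedes it below -/
import Mathlib

section
/- For every nonzero vector v in (Fin 6 → ZMod 2) with Q v = 1, there are exactly 6 external lines through v; that is, exactly 6 three-element subsets s of (Fin 6 → ZMod 2) with v ∈ s, whose elements sum to 0, and all of whose elements are nonzero with Q-value 1. -/
/-- The hyperbolic quadratic form on GF(2)^6. -/
def Q (v : Fin 6 → ZMod 2) : ZMod 2 := v 0 * v 1 + v 2 * v 3 + v 4 * v 5

lemma count12 : ∀ v : Fin 6 → ZMod 2, Q v = 1 →
    (Finset.univ.filter (fun a : Fin 6 → ZMod 2 =>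
      Q a = 1 ∧ Q (v + a) = 1 ∧ a ≠ 0 ∧ a ≠ v)).card = 12 := by decide

lemma addself (x : Fin 6 → ZMod 2) : x + x = 0 := by
  funext i
  exact CharTwo.add_self_eq_zero (x i)

lemma addcancel {v a : (Fin 6 → ZMod 2)} (h : v + a = 0) : a = v := by
  calc a = v + v + a := by rw [addself, zero_add]
    _ = v + (v + a) := by ring
    _ = v := by rw [h, add_zero]

lemma vmem (v a : Fin 6 → ZMod 2) : v + (v + a) = a := by
  rw [← add_assoc, addself, zero_add]

/-- Every point off the hyperbolic quadric Q⁺(5,2) lies on exactly 6 external lines. -/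
theorem external_lines_through_point (v : Fin 6 → ZMod 2) (hv : v ≠ 0) (hQ : Q v = 1) :
    (Finset.univ.filter (fun L : Finset (Fin 6 → ZMod 2) =>
      v ∈ L ∧ L.card = 3 ∧ (∑ w ∈ L, w) = 0 ∧ ∀ w ∈ L, w ≠ 0 ∧ Q w = 1)).card = 6 := by
  classical
  set S : Finset (Fin 6 → ZMod 2) := Finset.univ.filter (fun a : Fin 6 → ZMod 2 =>
      Q a = 1 ∧ Q (v + a) = 1 ∧ a ≠ 0 ∧ a ≠ v) with hS
  have hSmem : ∀ a, a ∈ S ↔ Q a = 1 ∧ Q (v + a) = 1 ∧ a ≠ 0 ∧ a ≠ v := by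
    intro a; simp [hS]
  set f : (Fin 6 → ZMod 2) → Finset (Fin 6 → ZMod 2) :=
    fun a => {v, a, v + a} with hf
  -- basic nondegeneracy facts for a ∈ S
  have key : ∀ a ∈ S, v ≠ a ∧ v ≠ v + a ∧ a ≠ v + a ∧ v + a ≠ 0 := by
    intro a haS
    rw [hSmem] at haS
    obtain ⟨hQa, hQva, ha0, hav⟩ := haS
    exact ⟨fun h => hav h.symm, fun h => ha0 (by linear_combination -h),
      fun h => hv (by linear_combination -h), fun h => hav (addcancel h)⟩
  -- The filtered set equals the image of S under f.
  have himg : (Finset.univ.filter (fun L : Finset (Fin 6 → ZMod 2) =>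
      v ∈ L ∧ L.card = 3 ∧ (∑ w ∈ L, w) = 0 ∧ ∀ w ∈ L, w ≠ 0 ∧ Q w = 1)) = S.image f := by
    ext L
    simp only [Finset.mem_filter, Finset.mem_univ, true_and, Finset.mem_image]
    constructor
    · rintro ⟨hvL, hcard, hsum, hall⟩
      obtain ⟨x, y, z, hxy, hxz, hyz, rfl⟩ := Finset.card_eq_three.mp hcard
      obtain ⟨a, b, hab, hva, hvb, hL⟩ :
          ∃ a b, a ≠ b ∧ v ≠ a ∧ v ≠ b ∧ ({x, y, z} : Finset _) = {v, a, b} := by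
        simp only [Finset.mem_insert, Finset.mem_singleton] at hvL
        rcases hvL with rfl | rfl | rfl
        · exact ⟨y, z, hyz, hxy, hxz, rfl⟩
        · refine ⟨x, z, hxz, fun h => hxy h.symm, hyz, ?_⟩
          ext w; simp; tauto
        · refine ⟨x, y, hxy, fun h => hxz h.symm, fun h => hyz h.symm, ?_⟩
          ext w; simp; tauto
      rw [hL] at hsum hall
      have hsum' : v + a + b = 0 := by
        rw [Finset.sum_insert (by simp [hva, hvb]),
          Finset.sum_insert (by simp [hab]), Finset.sum_singleton, ← add_assoc] at hsum
        exact hsum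
      have hb : b = v + a := by linear_combination hsum' - addself (v + a)
      have ha := hall a (by simp)
      have hbb := hall b (by simp)
      refine ⟨a, ?_, ?_⟩
      · rw [hSmem]
        exact ⟨ha.2, hb ▸ hbb.2, ha.1, fun h => hva h.symm⟩
      · rw [hf, hL, hb]
    · rintro ⟨a, haS, rfl⟩
      obtain ⟨hva, hvva, hava, hva0⟩ := key a haS
      rw [hSmem] at haS
      obtain ⟨hQa, hQva, ha0, hav⟩ := haS
      refine ⟨by simp [hf], ?_, ?_, ?_⟩
      · rw [hf]
        rw [Finset.card_insert_of_notMem (by simp [hva, hvva]),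
          Finset.card_insert_of_notMem (by simp [hava]), Finset.card_singleton]
      · rw [hf, Finset.sum_insert (by simp [hva, hvva]),
          Finset.sum_insert (by simp [hava]), Finset.sum_singleton]
        linear_combination addself v + addself a
      · intro w hw
        rw [hf] at hw
        simp only [Finset.mem_insert, Finset.mem_singleton] at hw
        rcases hw with rfl | rfl | rfl
        · exact ⟨hv, hQ⟩
        · exact ⟨ha0, hQa⟩
        · exact ⟨hva0, hQva⟩
  rw [himg]
  -- each fiber of f on S has exactly 2 elements
  have hfiber : ∀ L ∈ S.image f, (S.filter (fun x => f x = L)).card = 2 := by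
    intro L hL
    obtain ⟨a, haS, rfl⟩ := Finset.mem_image.mp hL
    obtain ⟨hva, hvva, hava, hva0⟩ := key a haS
    have haS' := (hSmem a).mp haS
    obtain ⟨hQa, hQva, ha0, hav⟩ := haS'
    have hvaS : v + a ∈ S := by
      rw [hSmem]
      refine ⟨hQva, ?_, hva0, fun h => hvva h.symm⟩
      rw [vmem]; exact hQa
    have hfva : f (v + a) = f a := by
      rw [hf]
      ext w
      simp only [Finset.mem_insert, Finset.mem_singleton, vmem]
      tauto
    have : S.filter (fun x => f x = f a) = {a, v + a} := by
      ext x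
      simp only [Finset.mem_filter, Finset.mem_insert, Finset.mem_singleton]
      constructor
      · rintro ⟨hxS, hfx⟩
        have hx : x ∈ f x := by rw [hf]; simp
        rw [hfx, hf] at hx
        simp only [Finset.mem_insert, Finset.mem_singleton] at hx
        have hxv : x ≠ v := fun h => ((hSmem x).mp hxS).2.2.2 h
        rcases hx with rfl | rfl | rfl
        · exact absurd rfl hxv
        · exact Or.inl rfl
        · exact Or.inr rfl
      · rintro (rfl | rfl)
        · exact ⟨haS, rfl⟩
        · exact ⟨hvaS, hfva⟩
    rw [this, Finset.card_insert_of_notMem (by simpa using hava), Finset.card_singleton]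
  have hcount := count12 v hQ
  rw [← hS] at hcount
  have hsum := Finset.card_eq_sum_card_image f S
  rw [Finset.sum_congr rfl hfiber, Finset.sum_const, smul_eq_mul, hcount] at hsum
  omega
end

section
/- A family F of seven 2-element subsets of Fin 8 has the property that any two distinct members of F intersect if and only if there exists i : Fin 8 such that F equals the set of all 2-element subsets of Fin 8 containing i. -/
lemma star_eq_image (i : Fin 8) :
    Finset.univ.filter (fun s : Finset (Fin 8) => s.card = 2 ∧ i ∈ s)
      = ({i}ᶜ : Finset (Fin 8)).image (fun j => ({i, j} : Finset (Fin 8))) := by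
  ext s
  simp only [Finset.mem_filter, Finset.mem_univ, true_and, Finset.mem_image,
    Finset.mem_compl, Finset.mem_singleton]
  constructor
  · rintro ⟨hc, hi⟩
    obtain ⟨x, y, hxy, rfl⟩ := Finset.card_eq_two.mp hc
    rcases Finset.mem_insert.mp hi with rfl | h
    · exact ⟨y, fun h => hxy h.symm, rfl⟩
    · rw [Finset.mem_singleton] at h
      subst h
      exact ⟨x, fun h => hxy h, by rw [Finset.pair_comm]⟩
  · rintro ⟨j, hj, rfl⟩
    exact ⟨Finset.card_pair (fun h => hj h.symm), Finset.mem_insert_self _ _⟩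

lemma star_card (i : Fin 8) :
    (Finset.univ.filter (fun s : Finset (Fin 8) => s.card = 2 ∧ i ∈ s)).card = 7 := by
  rw [star_eq_image]
  rw [Finset.card_image_of_injOn]
  · rw [Finset.card_compl, Finset.card_singleton]
    rfl
  · intro x hx y hy h
    simp only [Finset.coe_compl, Set.mem_compl_iff, Finset.mem_coe, Finset.mem_singleton] at hx hy
    simp only at h
    have : x ∈ ({i, y} : Finset (Fin 8)) := h ▸ Finset.mem_insert_of_mem (Finset.mem_singleton_self x)
    rcases Finset.mem_insert.mp this with h1 | h1
    · exact absurd h1 hx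
    · exact Finset.mem_singleton.mp h1

/-- A family of seven 2-element subsets of `Fin 8` is pairwise intersecting if and only
if it is a "star": the set of all 2-element subsets containing some fixed mark `i`. -/
theorem heptad_pairwise_intersecting_iff_star (F : Finset (Finset (Fin 8)))
    (hcard : F.card = 7) (h2 : ∀ s ∈ F, s.card = 2) :
    (∀ s ∈ F, ∀ t ∈ F, s ≠ t → (s ∩ t).Nonempty) ↔
      ∃ i : Fin 8, F = Finset.univ.filter (fun s : Finset (Fin 8) => s.card = 2 ∧ i ∈ s) := by
  constructor
  · intro hF
    -- F is nonempty
    have hne : F.Nonempty := Finset.card_pos.mp (by omega)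
    obtain ⟨s, hs⟩ := hne
    obtain ⟨a, b, hab, hsab⟩ := Finset.card_eq_two.mp (h2 s hs)
    -- key: either all members contain a, or all contain b, or F is a triangle
    by_cases ha : ∀ t ∈ F, a ∈ t
    · refine ⟨a, ?_⟩
      apply Finset.eq_of_subset_of_card_le
      · intro t ht
        simp only [Finset.mem_filter, Finset.mem_univ, true_and]
        exact ⟨h2 t ht, ha t ht⟩
      · rw [star_card, hcard]
    by_cases hb : ∀ t ∈ F, b ∈ t
    · refine ⟨b, ?_⟩
      apply Finset.eq_of_subset_of_card_le
      · intro t ht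
        simp only [Finset.mem_filter, Finset.mem_univ, true_and]
        exact ⟨h2 t ht, hb t ht⟩
      · rw [star_card, hcard]
    -- triangle case: contradiction
    exfalso
    push_neg at ha hb
    obtain ⟨t, ht, hat⟩ := ha
    obtain ⟨u, hu, hbu⟩ := hb
    have has : a ∈ s := hsab ▸ Finset.mem_insert_self a _
    have hbs : b ∈ s := hsab ▸ Finset.mem_insert_of_mem (Finset.mem_singleton_self b)
    have hst : s ≠ t := fun h => hat (h ▸ has)
    have hsu : s ≠ u := fun h => hbu (h ▸ hbs)
    -- s ∩ t nonempty, a ∉ t so b ∈ t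
    have hbt : b ∈ t := by
      obtain ⟨x, hx⟩ := hF s hs t ht hst
      rw [Finset.mem_inter] at hx
      have := hx.1
      rw [hsab, Finset.mem_insert, Finset.mem_singleton] at this
      rcases this with rfl | rfl
      · exact absurd hx.2 hat
      · exact hx.2
    have hau : a ∈ u := by
      obtain ⟨x, hx⟩ := hF s hs u hu hsu
      rw [Finset.mem_inter] at hx
      have := hx.1
      rw [hsab, Finset.mem_insert, Finset.mem_singleton] at this
      rcases this with rfl | rfl
      · exact hx.2
      · exact absurd hx.2 hbu
    -- t = {b, c}
    obtain ⟨x, y, hxy, htxy⟩ := Finset.card_eq_two.mp (h2 t ht)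
    have hbt' := hbt
    rw [htxy, Finset.mem_insert, Finset.mem_singleton] at hbt'
    -- let c be the other element of t
    obtain ⟨c, htbc, hcb⟩ : ∃ c, t = {b, c} ∧ c ≠ b := by
      rcases hbt' with rfl | rfl
      · exact ⟨y, htxy, fun h => hxy h.symm⟩
      · exact ⟨x, by rw [htxy, Finset.pair_comm], hxy⟩
    have hca : c ≠ a := by
      rintro rfl
      exact hat (htbc ▸ Finset.mem_insert_of_mem (Finset.mem_singleton_self c))
    have hct : c ∈ t := htbc ▸ Finset.mem_insert_of_mem (Finset.mem_singleton_self c)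
    -- t ≠ u since b ∈ t, b ∉ u; so they meet, and since b ∉ u, c ∈ u
    have htu : t ≠ u := fun h => hbu (h ▸ hbt)
    have hcu : c ∈ u := by
      obtain ⟨x, hx⟩ := hF t ht u hu htu
      rw [Finset.mem_inter] at hx
      have := hx.1
      rw [htbc, Finset.mem_insert, Finset.mem_singleton] at this
      rcases this with rfl | rfl
      · exact absurd hx.2 hbu
      · exact hx.2
    have huac : u = {a, c} := by
      apply (Finset.eq_of_subset_of_card_le ?_ ?_).symm
      · intro z hz
        rw [Finset.mem_insert, Finset.mem_singleton] at hz
        rcases hz with rfl | rfl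
        · exact hau
        · exact hcu
      · rw [h2 u hu, Finset.card_pair (fun h => hca h.symm)]
    -- every member of F is s, t, or u
    have hpair : ∀ v ∈ F, ∀ x y : Fin 8, x ∈ v → y ∈ v → x ≠ y → v = {x, y} := by
      intro v hv x y hx hy hxy
      refine (Finset.eq_of_subset_of_card_le ?_ ?_).symm
      · intro z hz
        rw [Finset.mem_insert, Finset.mem_singleton] at hz
        rcases hz with rfl | rfl
        · exact hx
        · exact hy
      · rw [h2 v hv, Finset.card_pair hxy]
    have key : ∀ v ∈ F, v = s ∨ v = t ∨ v = u := by
      intro v hv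
      by_cases hvs : v = s; · exact Or.inl hvs
      by_cases hvt : v = t; · exact Or.inr (Or.inl hvt)
      by_cases hvu : v = u; · exact Or.inr (Or.inr hvu)
      exfalso
      have hmeet : ∀ w ∈ F, ∀ x y : Fin 8, w = {x, y} → v ≠ w → x ∉ v → y ∈ v := by
        intro w hw x y hwxy hvw hxv
        obtain ⟨z, hz⟩ := hF v hv w hw hvw
        rw [Finset.mem_inter] at hz
        have := hz.2
        rw [hwxy, Finset.mem_insert, Finset.mem_singleton] at this
        rcases this with rfl | rfl
        · exact absurd hz.1 hxv
        · exact hz.1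
      by_cases hav : a ∈ v
      · by_cases hbv : b ∈ v
        · exact hvs (hsab ▸ hpair v hv a b hav hbv hab)
        · have hcv : c ∈ v := hmeet t ht b c htbc hvt hbv
          exact hvu (huac ▸ hpair v hv a c hav hcv (fun h => hca h.symm))
      · have hbv : b ∈ v := hmeet s hs a b hsab hvs hav
        have hcv : c ∈ v := hmeet u hu a c huac hvu hav
        exact hvt (htbc ▸ hpair v hv b c hbv hcv (fun h => hcb h.symm))
    have hsub : F ⊆ {s, t, u} := by
      intro v hv
      simp only [Finset.mem_insert, Finset.mem_singleton]
      exact key v hv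
    have hle : F.card ≤ 3 := le_trans (Finset.card_le_card hsub)
      (le_trans (Finset.card_insert_le _ _)
        (by simpa using Nat.add_le_add_right (Finset.card_insert_le t {u}) 1))
    omega
  · rintro ⟨i, rfl⟩
    intro s hs t ht hst
    simp only [Finset.mem_filter, Finset.mem_univ, true_and] at hs ht
    exact ⟨i, Finset.mem_inter.mpr ⟨hs.2, ht.2⟩⟩
end

section
/- There are exactly 8 Conwell heptads; that is, exactly 8 sets H of seven nonzero vectors v of (Fin 6 → ZMod 2) with Q v = 1 such that Q(a + b) = 1 for all distinct a, b ∈ H. -/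
set_option maxRecDepth 40000

/-- A Conwell heptad: a set of seven off-quadric points such that the line joining any
two of them is external to the quadric. -/
def IsConwellHeptad (H : Finset (Fin 6 → ZMod 2)) : Prop :=
  H.card = 7 ∧ (∀ v ∈ H, v ≠ 0 ∧ Q v = 1) ∧
    ∀ a ∈ H, ∀ b ∈ H, a ≠ b → Q (a + b) = 1

instance : DecidablePred IsConwellHeptad := fun H => by
  unfold IsConwellHeptad; infer_instance

def S : Finset (Fin 6 → ZMod 2) := Finset.univ.filter (fun v => v ≠ 0 ∧ Q v = 1)

def enc (v : Fin 6 → ZMod 2) : ℕ :=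
  (v 0).val + 2*(v 1).val + 4*(v 2).val + 8*(v 3).val + 16*(v 4).val + 32*(v 5).val

theorem enc_inj : Function.Injective enc := by decide

def encE : (Fin 6 → ZMod 2) ↪ ℕ := ⟨enc, enc_inj⟩

def N' (p : Fin 6 → ZMod 2) : Finset (Fin 6 → ZMod 2) :=
  S.filter (fun x => enc p < enc x ∧ Q (p + x) = 1)

def F (p : Fin 6 → ZMod 2) : Finset (Finset (Fin 6 → ZMod 2)) :=
  ((N' p).powersetCard 6).filter
    (fun T => ∀ a ∈ T, ∀ b ∈ T, a ≠ b → Q (a + b) = 1)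

/-! Numeric versions -/

def bitk (n k : ℕ) : ℕ := n / 2^k % 2

def qsum (a b : ℕ) : ℕ :=
  ((bitk a 0 + bitk b 0) * (bitk a 1 + bitk b 1)
    + (bitk a 2 + bitk b 2) * (bitk a 3 + bitk b 3)
    + (bitk a 4 + bitk b 4) * (bitk a 5 + bitk b 5)) % 2

def Sn : Finset ℕ := (Finset.range 64).filter (fun n => 0 < n ∧ qsum n 0 = 1)

def Nn (m : ℕ) : Finset ℕ := Sn.filter (fun x => m < x ∧ qsum m x = 1)

def Fn (m : ℕ) : Finset (Finset ℕ) :=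
  ((Nn m).powersetCard 6).filter
    (fun T => ∀ a ∈ T, ∀ b ∈ T, a ≠ b → qsum a b = 1)

theorem qsum_corr : ∀ a b : Fin 6 → ZMod 2,
    (Q (a + b) = 1 ↔ qsum (enc a) (enc b) = 1) := by decide

theorem Sn_corr : Sn = S.map encE := by decide

theorem Nn_corr : ∀ p : Fin 6 → ZMod 2, Nn (enc p) = (N' p).map encE := by decide

theorem F_card (p : Fin 6 → ZMod 2) : (F p).card = (Fn (enc p)).card := by
  apply Finset.card_bij (fun T _ => T.map encE)
  · intro T hT
    simp only [F, Finset.mem_filter, Finset.mem_powersetCard] at hT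
    obtain ⟨⟨hsub, hcard⟩, hpair⟩ := hT
    simp only [Fn, Finset.mem_filter, Finset.mem_powersetCard]
    refine ⟨⟨?_, ?_⟩, ?_⟩
    · rw [Nn_corr]; exact Finset.map_subset_map.mpr hsub
    · rw [Finset.card_map]; exact hcard
    · simp only [Finset.mem_map]
      rintro a ⟨x, hx, rfl⟩ b ⟨y, hy, rfl⟩ hne
      have hxy : x ≠ y := fun h => hne (by rw [h])
      exact (qsum_corr x y).mp (hpair x hx y hy hxy)
  · intro T₁ _ T₂ _ h
    exact Finset.map_injective encE h
  · intro T' hT'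
    simp only [Fn, Finset.mem_filter, Finset.mem_powersetCard] at hT'
    obtain ⟨⟨hsub, hcard⟩, hpair⟩ := hT'
    rw [Nn_corr] at hsub
    obtain ⟨u, hu, rfl⟩ := Finset.subset_map_iff.mp hsub
    refine ⟨u, ?_, rfl⟩
    simp only [F, Finset.mem_filter, Finset.mem_powersetCard]
    refine ⟨⟨hu, by rwa [Finset.card_map] at hcard⟩, ?_⟩
    intro a ha b hb hab
    refine (qsum_corr a b).mpr (hpair (enc a) ?_ (enc b) ?_ ?_)
    · exact Finset.mem_map_of_mem encE ha
    · exact Finset.mem_map_of_mem encE hb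
    · exact fun h => hab (enc_inj h)

theorem notMem_N'_self {p x : Fin 6 → ZMod 2} (hx : x ∈ N' p) : x ≠ p := by
  simp only [N', Finset.mem_filter] at hx
  intro h; exact absurd hx.2.1 (by rw [h]; exact lt_irrefl _)

theorem min_of_mem {p : Fin 6 → ZMod 2} {T : Finset (Fin 6 → ZMod 2)}
    (hT : T ⊆ N' p) {x : Fin 6 → ZMod 2} (hx : x ∈ insert p T) : enc p ≤ enc x := by
  rcases Finset.mem_insert.mp hx with rfl | hx
  · exact le_refl _
  · have := hT hx
    simp only [N', Finset.mem_filter] at this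
    exact le_of_lt this.2.1

theorem key : Finset.univ.filter IsConwellHeptad =
    S.biUnion (fun p => (F p).image (insert p)) := by
  apply Finset.ext
  intro H
  simp only [Finset.mem_filter, Finset.mem_univ, true_and, Finset.mem_biUnion,
    Finset.mem_image]
  constructor
  · intro hH
    obtain ⟨hc, hQ, hpair⟩ := hH
    have hne : H.Nonempty := Finset.card_pos.mp (by omega)
    obtain ⟨p, hp, hmin⟩ := Finset.exists_min_image H enc hne
    have hins : insert p (H.erase p) = H := Finset.insert_erase hp
    refine ⟨p, ?_, H.erase p, ?_, hins⟩
    · simp only [S, Finset.mem_filter, Finset.mem_univ, true_and]; exact hQ p hp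
    · simp only [F, Finset.mem_filter, Finset.mem_powersetCard]
      refine ⟨⟨?_, ?_⟩, ?_⟩
      · intro q hq
        have hqH := Finset.mem_of_mem_erase hq
        have hqp := Finset.ne_of_mem_erase hq
        simp only [N', S, Finset.mem_filter, Finset.mem_univ, true_and]
        refine ⟨hQ q hqH, lt_of_le_of_ne (hmin q hqH) ?_, hpair p hp q hqH (Ne.symm hqp)⟩
        intro h; exact hqp (enc_inj h.symm)
      · rw [Finset.card_erase_of_mem hp, hc]
      · intro a ha b hb hab
        exact hpair a (Finset.mem_of_mem_erase ha) b (Finset.mem_of_mem_erase hb) hab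
  · rintro ⟨p, hpS, T, hT, rfl⟩
    simp only [F, Finset.mem_filter, Finset.mem_powersetCard] at hT
    obtain ⟨⟨hsub, hcard⟩, hpair⟩ := hT
    have hpT : p ∉ T := fun h => notMem_N'_self (hsub h) rfl
    simp only [S, Finset.mem_filter, Finset.mem_univ, true_and] at hpS
    refine ⟨?_, ?_, ?_⟩
    · rw [Finset.card_insert_of_notMem hpT, hcard]
    · intro v hv
      rcases Finset.mem_insert.mp hv with rfl | hv
      · exact hpS
      · have := hsub hv
        simp only [N', S, Finset.mem_filter, Finset.mem_univ, true_and] at this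
        exact this.1
    · have hTQ : ∀ x ∈ T, Q (p + x) = 1 := by
        intro x hx
        have := hsub hx
        simp only [N', Finset.mem_filter] at this
        exact this.2.2
      intro a ha b hb hab
      rcases Finset.mem_insert.mp ha with ha' | ha' <;>
        rcases Finset.mem_insert.mp hb with hb' | hb'
      · exact absurd (ha'.trans hb'.symm) hab
      · rw [ha']; exact hTQ b hb'
      · rw [hb', add_comm]; exact hTQ a ha'
      · exact hpair a ha' b hb' hab

theorem disj : ∀ p ∈ S, ∀ q ∈ S, p ≠ q →
    Disjoint ((F p).image (insert p)) ((F q).image (insert q)) := by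
  intro p _ q _ hpq
  rw [Finset.disjoint_left]
  rintro H hHp hHq
  obtain ⟨T, hT, rfl⟩ := Finset.mem_image.mp hHp
  obtain ⟨T', hT', hE⟩ := Finset.mem_image.mp hHq
  have hsub : T ⊆ N' p := (Finset.mem_powersetCard.mp (Finset.mem_filter.mp hT).1).1
  have hsub' : T' ⊆ N' q := (Finset.mem_powersetCard.mp (Finset.mem_filter.mp hT').1).1
  apply hpq
  apply enc_inj
  apply le_antisymm
  · refine min_of_mem hsub ?_
    rw [← hE]; exact Finset.mem_insert_self q T'
  · refine min_of_mem hsub' ?_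
    rw [hE]; exact Finset.mem_insert_self p T

set_option maxHeartbeats 1000000 in
/-- There are exactly 8 Conwell heptads. -/
theorem conwell_heptads_card :
    (Finset.univ.filter IsConwellHeptad).card = 8 := by
  rw [key, Finset.card_biUnion disj]
  have himg : ∀ p ∈ S, ((F p).image (insert p)).card = (Fn (enc p)).card := by
    intro p _
    rw [← F_card p]
    apply Finset.card_image_of_injOn
    intro T hT T' hT' hE
    have h1 : p ∉ T := fun h =>
      notMem_N'_self ((Finset.mem_powersetCard.mp (Finset.mem_filter.mp hT).1).1 h) rfl
    have h2 : p ∉ T' := fun h =>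
      notMem_N'_self ((Finset.mem_powersetCard.mp (Finset.mem_filter.mp hT').1).1 h) rfl
    rw [← Finset.erase_insert h1, ← Finset.erase_insert h2, hE]
  rw [Finset.sum_congr rfl himg]
  have hsum : ∑ x ∈ S, (Fn (enc x)).card = ∑ n ∈ Sn, (Fn n).card := by
    rw [Sn_corr, Finset.sum_map]; rfl
  rw [hsum]
  decide
end

section
/- Any two distinct Conwell heptads have exactly one point in common: if H₁ and H₂ are distinct Conwell heptads of the hyperbolic quadric Q of PG(5,2), then the intersection H₁ ∩ H₂ has cardinality 1. -/
set_option maxRecDepth 100000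
set_option maxHeartbeats 4000000

def offQ : Finset (Fin 6 → ZMod 2) := {![0,0,0,0,1,1], ![0,0,0,1,1,1], ![0,0,1,0,1,1], ![0,0,1,1,0,0], ![0,0,1,1,0,1], ![0,0,1,1,1,0], ![0,1,0,0,1,1], ![0,1,0,1,1,1], ![0,1,1,0,1,1], ![0,1,1,1,0,0], ![0,1,1,1,0,1], ![0,1,1,1,1,0], ![1,0,0,0,1,1], ![1,0,0,1,1,1], ![1,0,1,0,1,1], ![1,0,1,1,0,0], ![1,0,1,1,0,1], ![1,0,1,1,1,0], ![1,1,0,0,0,0], ![1,1,0,0,0,1], ![1,1,0,0,1,0], ![1,1,0,1,0,0], ![1,1,0,1,0,1], ![1,1,0,1,1,0], ![1,1,1,0,0,0], ![1,1,1,0,0,1], ![1,1,1,0,1,0], ![1,1,1,1,1,1]}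

def L : List (Finset (Fin 6 → ZMod 2)) := [
  {![0,0,0,0,1,1], ![0,0,1,1,0,1], ![0,1,1,1,1,0], ![1,0,1,1,1,0], ![1,1,0,0,1,0], ![1,1,0,1,0,1], ![1,1,1,0,0,1]},
  {![0,0,0,0,1,1], ![0,0,1,1,1,0], ![0,1,1,1,0,1], ![1,0,1,1,0,1], ![1,1,0,0,0,1], ![1,1,0,1,1,0], ![1,1,1,0,1,0]},
  {![0,0,0,1,1,1], ![0,0,1,0,1,1], ![0,1,1,1,0,0], ![1,0,1,1,0,0], ![1,1,0,0,0,1], ![1,1,0,0,1,0], ![1,1,1,1,1,1]},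
  {![0,0,0,1,1,1], ![0,0,1,1,0,0], ![0,1,1,0,1,1], ![1,0,1,0,1,1], ![1,1,0,1,0,1], ![1,1,0,1,1,0], ![1,1,1,0,0,0]},
  {![0,0,1,0,1,1], ![0,0,1,1,0,0], ![0,1,0,1,1,1], ![1,0,0,1,1,1], ![1,1,0,1,0,0], ![1,1,1,0,0,1], ![1,1,1,0,1,0]},
  {![0,0,1,1,0,1], ![0,0,1,1,1,0], ![0,1,0,0,1,1], ![1,0,0,0,1,1], ![1,1,0,1,0,0], ![1,1,1,0,0,0], ![1,1,1,1,1,1]},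
  {![0,1,0,0,1,1], ![0,1,1,1,0,1], ![0,1,1,1,1,0], ![1,0,0,1,1,1], ![1,0,1,0,1,1], ![1,0,1,1,0,0], ![1,1,0,0,0,0]},
  {![0,1,0,1,1,1], ![0,1,1,0,1,1], ![0,1,1,1,0,0], ![1,0,0,0,1,1], ![1,0,1,1,0,1], ![1,0,1,1,1,0], ![1,1,0,0,0,0]}]

def common (a b : Fin 6 → ZMod 2) : Finset (Fin 6 → ZMod 2) :=
  offQ.filter (fun c => c ≠ a ∧ c ≠ b ∧ Q (a + c) = 1 ∧ Q (b + c) = 1)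

def rest (a b : Fin 6 → ZMod 2) : Finset (Fin 6 → ZMod 2) :=
  (common a b).filter (fun c => ∃ d ∈ common a b, d ≠ c ∧ Q (c + d) = 1)

def hept (a b : Fin 6 → ZMod 2) : Finset (Fin 6 → ZMod 2) := insert a (insert b (rest a b))

theorem off_char : ∀ v : Fin 6 → ZMod 2, v ≠ 0 ∧ Q v = 1 → v ∈ offQ := by decide

theorem key_s7 : ∀ a ∈ offQ, ∀ b ∈ offQ, Q (a + b) = 1 →
    (rest a b).card = 5 ∧ hept a b ∈ L := by decide

theorem pairwise_L : ∀ A ∈ L, ∀ B ∈ L, A ≠ B → (A ∩ B).card = 1 := by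
  intro A hA B hB hAB
  fin_cases hA <;> fin_cases hB <;> first | exact absurd rfl hAB | decide

theorem classify (H : Finset (Fin 6 → ZMod 2)) (h : IsConwellHeptad H) : H ∈ L := by
  obtain ⟨hcard, hoff, hadj⟩ := h
  have hsub : H ⊆ offQ := fun v hv => off_char v (hoff v hv)
  obtain ⟨a, ha, b, hb, hab⟩ := Finset.one_lt_card.mp (by omega : 1 < H.card)
  have habset : ({a, b} : Finset _) ⊆ H := by
    intro x hx; simp only [Finset.mem_insert, Finset.mem_singleton] at hx
    rcases hx with rfl | rfl <;> assumption
  set R := H \ {a, b} with hR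
  have hRcard : R.card = 5 := by
    rw [hR, Finset.card_sdiff_of_subset habset, hcard, Finset.card_insert_of_notMem (by simpa using hab),
      Finset.card_singleton]
  have hRcommon : R ⊆ common a b := by
    intro c hc
    rw [hR, Finset.mem_sdiff] at hc
    obtain ⟨hcH, hcab⟩ := hc
    simp only [Finset.mem_insert, Finset.mem_singleton, not_or] at hcab
    refine Finset.mem_filter.mpr ⟨hsub hcH, hcab.1, hcab.2, ?_, ?_⟩
    · exact hadj a ha c hcH (Ne.symm hcab.1)
    · exact hadj b hb c hcH (Ne.symm hcab.2)
  have hRrest : R ⊆ rest a b := by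
    intro c hc
    refine Finset.mem_filter.mpr ⟨hRcommon hc, ?_⟩
    have : 1 < R.card := by omega
    obtain ⟨x, hx, y, hy, hxy⟩ := Finset.one_lt_card.mp this
    have hcH : c ∈ H := (Finset.sdiff_subset) hc
    rcases eq_or_ne x c with h1 | h1
    · have hyH : y ∈ H := (Finset.sdiff_subset) hy
      have hyc : y ≠ c := by rw [← h1]; exact Ne.symm hxy
      exact ⟨y, hRcommon hy, hyc, hadj c hcH y hyH (Ne.symm hyc)⟩
    · have hxH : x ∈ H := (Finset.sdiff_subset) hx
      exact ⟨x, hRcommon hx, h1, hadj c hcH x hxH (Ne.symm h1)⟩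
  have hQab : Q (a + b) = 1 := hadj a ha b hb hab
  obtain ⟨hrestcard, hheptL⟩ := key_s7 a (hsub ha) b (hsub hb) hQab
  have hReq : R = rest a b := Finset.eq_of_subset_of_card_le hRrest (by omega)
  have hHeq : H = hept a b := by
    rw [hept, ← hReq, hR]
    ext x
    simp only [Finset.mem_insert, Finset.mem_sdiff, Finset.mem_insert, Finset.mem_singleton]
    constructor
    · intro hx
      by_cases h1 : x = a
      · left; exact h1
      · by_cases h2 : x = b
        · right; left; exact h2
        · right; right; exact ⟨hx, by tauto⟩
    · rintro (rfl | rfl | ⟨hx, -⟩) <;> first | assumption | exact hx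
  rw [hHeq]; exact hheptL

/-- Any two distinct Conwell heptads share exactly one point. -/
theorem conwell_heptads_intersect_in_one (H₁ H₂ : Finset (Fin 6 → ZMod 2))
    (h₁ : IsConwellHeptad H₁) (h₂ : IsConwellHeptad H₂) (hne : H₁ ≠ H₂) :
    (H₁ ∩ H₂).card = 1 :=
  pairwise_L H₁ (classify H₁ h₁) H₂ (classify H₂ h₂) hne
end

section
/- Under any isomorphism with G₂(8), Conwell heptads correspond exactly to stars: let f be a bijection from the off-quadric points {v : Fin 6 → ZMod 2 | v ≠ 0 ∧ Q v = 1} to the 2-element subsets of Fin 8 such that for all pairwise distinct off-quadric a, b, c, a + b + c = 0 iff (f(a) ∪ f(b) ∪ f(c)).card = 3. Then a set H of off-quadric points is a Conwell heptad if and only if there exists i : Fin 8 such that the image f(H) equals the set of all 2-element subsets of Fin 8 containing i. -/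
lemma pair_other {s : Finset (Fin 8)} (h : s.card = 2) {i : Fin 8} (hi : i ∈ s) :
    ∃ x, x ≠ i ∧ s = {i, x} := by
  obtain ⟨a, b, hab, rfl⟩ := Finset.card_eq_two.mp h
  simp only [Finset.mem_insert, Finset.mem_singleton] at hi
  rcases hi with rfl | rfl
  · exact ⟨b, fun h => hab h.symm, rfl⟩
  · exact ⟨a, hab, Finset.pair_comm a i⟩

lemma eq_pair {u : Finset (Fin 8)} (h : u.card = 2) {x y : Fin 8} (hxy : x ≠ y)
    (hx : x ∈ u) (hy : y ∈ u) : u = {x, y} := by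
  refine (Finset.eq_of_subset_of_card_le ?_ ?_).symm
  · intro z hz
    simp only [Finset.mem_insert, Finset.mem_singleton] at hz
    rcases hz with rfl | rfl <;> assumption
  · rw [h, Finset.card_pair hxy]

lemma star_lemma (T : Finset (Finset (Fin 8))) (h2 : ∀ s ∈ T, s.card = 2)
    (hcard : 4 ≤ T.card)
    (hint : ∀ s ∈ T, ∀ t ∈ T, s ≠ t → (s ∩ t).Nonempty) :
    ∃ i, ∀ s ∈ T, i ∈ s := by
  obtain ⟨s, hs, t, ht, hst⟩ := Finset.one_lt_card.mp (show 1 < T.card by omega)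
  obtain ⟨i, hi⟩ := hint s hs t ht hst
  rw [Finset.mem_inter] at hi
  by_cases hall : ∀ u ∈ T, i ∈ u
  · exact ⟨i, hall⟩
  push_neg at hall
  obtain ⟨u, hu, hiu⟩ := hall
  have hus : u ≠ s := fun h => hiu (h ▸ hi.1)
  have hut : u ≠ t := fun h => hiu (h ▸ hi.2)
  obtain ⟨x, hxi, hsx⟩ := pair_other (h2 s hs) hi.1
  obtain ⟨y, hyi, hty⟩ := pair_other (h2 t ht) hi.2
  have hxy : x ≠ y := by rintro rfl; exact hst (hsx.trans hty.symm)
  -- u meets s and t but avoids i, so u = {x, y}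
  have hxu : x ∈ u := by
    obtain ⟨z, hz⟩ := hint u hu s hs hus
    rw [Finset.mem_inter, hsx] at hz
    simp only [Finset.mem_insert, Finset.mem_singleton] at hz
    rcases hz.2 with rfl | rfl
    · exact absurd hz.1 hiu
    · exact hz.1
  have hyu : y ∈ u := by
    obtain ⟨z, hz⟩ := hint u hu t ht hut
    rw [Finset.mem_inter, hty] at hz
    simp only [Finset.mem_insert, Finset.mem_singleton] at hz
    rcases hz.2 with rfl | rfl
    · exact absurd hz.1 hiu
    · exact hz.1
  have huxy : u = {x, y} := eq_pair (h2 u hu) hxy hxu hyu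
  -- get a fourth set w
  have hnsub : ¬ T ⊆ {s, t, u} := by
    intro hsub
    have h3 : ({s, t, u} : Finset (Finset (Fin 8))).card ≤ 3 := by
      apply le_trans (Finset.card_insert_le _ _)
      have h4 := Finset.card_insert_le t ({u} : Finset (Finset (Fin 8)))
      simp only [Finset.card_singleton] at h4
      omega
    have := Finset.card_le_card hsub
    omega
  obtain ⟨w, hw, hwstu⟩ := Finset.not_subset.mp hnsub
  simp only [Finset.mem_insert, Finset.mem_singleton, not_or] at hwstu
  obtain ⟨hws, hwt, hwu⟩ := hwstu
  exfalso
  by_cases hiw : i ∈ w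
  · -- w meets u, so x ∈ w or y ∈ w, so w = s or w = t
    obtain ⟨z, hz⟩ := hint w hw u hu hwu
    rw [Finset.mem_inter, huxy] at hz
    simp only [Finset.mem_insert, Finset.mem_singleton] at hz
    rcases hz.2 with rfl | rfl
    · exact hws ((eq_pair (h2 w hw) (fun h => hxi h.symm) hiw hz.1).trans hsx.symm)
    · exact hwt ((eq_pair (h2 w hw) (fun h => hyi h.symm) hiw hz.1).trans hty.symm)
  · -- w avoids i, meets s and t, so w = {x,y} = u
    have hxw : x ∈ w := by
      obtain ⟨z, hz⟩ := hint w hw s hs hws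
      rw [Finset.mem_inter, hsx] at hz
      simp only [Finset.mem_insert, Finset.mem_singleton] at hz
      rcases hz.2 with rfl | rfl
      · exact absurd hz.1 hiw
      · exact hz.1
    have hyw : y ∈ w := by
      obtain ⟨z, hz⟩ := hint w hw t ht hwt
      rw [Finset.mem_inter, hty] at hz
      simp only [Finset.mem_insert, Finset.mem_singleton] at hz
      rcases hz.2 with rfl | rfl
      · exact absurd hz.1 hiw
      · exact hz.1
    exact hwu ((eq_pair (h2 w hw) hxy hxw hyw).trans huxy.symm)

lemma zsum : ∀ x y z : ZMod 2, x + y + z = 0 → x + y = z := by decide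
lemma zadd0 : ∀ x y : ZMod 2, x + y = 0 → x = y := by decide
lemma zself : ∀ x y : ZMod 2, (x + y) + (x + y) = 0 := by decide
lemma zcancel : ∀ x y : ZMod 2, x = x + y → y = 0 := by decide

lemma starCard : ∀ i : Fin 8,
    (Finset.univ.filter (fun s : Finset (Fin 8) => s.card = 2 ∧ i ∈ s)).card = 7 := by decide



/-- Under any isomorphism of the off-quadric configuration with G₂(8), the Conwell
heptads correspond exactly to the "stars": the sets of all 2-element subsets of `Fin 8`
sharing a fixed mark `i`. -/
theorem conwell_heptads_are_stars
    (f : {v : Fin 6 → ZMod 2 // v ≠ 0 ∧ Q v = 1} ≃ {s : Finset (Fin 8) // s.card = 2})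
    (hf : ∀ a b c : {v : Fin 6 → ZMod 2 // v ≠ 0 ∧ Q v = 1},
      a ≠ b → a ≠ c → b ≠ c →
      ((a : Fin 6 → ZMod 2) + (b : Fin 6 → ZMod 2) + (c : Fin 6 → ZMod 2) = 0 ↔
        ((f a : Finset (Fin 8)) ∪ (f b : Finset (Fin 8)) ∪ (f c : Finset (Fin 8))).card = 3))
    (H : Finset {v : Fin 6 → ZMod 2 // v ≠ 0 ∧ Q v = 1}) :
    (H.card = 7 ∧ ∀ a ∈ H, ∀ b ∈ H, a ≠ b →
        Q ((a : Fin 6 → ZMod 2) + (b : Fin 6 → ZMod 2)) = 1) ↔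
      ∃ i : Fin 8, H.image (fun a => (f a : Finset (Fin 8))) =
        Finset.univ.filter (fun s : Finset (Fin 8) => s.card = 2 ∧ i ∈ s) := by
  have hinj : Function.Injective
      (fun a : {v : Fin 6 → ZMod 2 // v ≠ 0 ∧ Q v = 1} => (f a : Finset (Fin 8))) :=
    fun a b h => f.injective (Subtype.ext h)
  constructor
  · rintro ⟨h7, hpair⟩
    set T := H.image (fun a => (f a : Finset (Fin 8))) with hTdef
    have hTcard : T.card = 7 := by
      rw [hTdef, Finset.card_image_of_injective _ hinj, h7]
    have h2 : ∀ s ∈ T, s.card = 2 := by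
      intro s hs
      obtain ⟨a, _, rfl⟩ := Finset.mem_image.mp hs
      exact (f a).2
    have hint : ∀ s ∈ T, ∀ t ∈ T, s ≠ t → (s ∩ t).Nonempty := by
      intro s hs t ht hstne
      obtain ⟨a, ha, rfl⟩ := Finset.mem_image.mp hs
      obtain ⟨b, hb, rfl⟩ := Finset.mem_image.mp ht
      have hab : a ≠ b := by rintro rfl; exact hstne rfl
      have hQ : Q ((a : Fin 6 → ZMod 2) + (b : Fin 6 → ZMod 2)) = 1 := hpair a ha b hb hab
      have hne0 : (a : Fin 6 → ZMod 2) + (b : Fin 6 → ZMod 2) ≠ 0 := by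
        intro h0
        apply hab
        apply Subtype.ext
        funext j
        exact zadd0 _ _ (by simpa using congrFun h0 j)
      set c : {v : Fin 6 → ZMod 2 // v ≠ 0 ∧ Q v = 1} :=
        ⟨(a : Fin 6 → ZMod 2) + (b : Fin 6 → ZMod 2), hne0, hQ⟩ with hc
      have hac : a ≠ c := by
        intro h
        apply b.2.1
        funext j
        have h3 : (a : Fin 6 → ZMod 2) j = (a : Fin 6 → ZMod 2) j + (b : Fin 6 → ZMod 2) j := by
          simpa [hc] using congrFun (congrArg Subtype.val h) j
        simpa using zcancel _ _ h3
      have hbc : b ≠ c := by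
        intro h
        apply a.2.1
        funext j
        have h3 : (b : Fin 6 → ZMod 2) j = (b : Fin 6 → ZMod 2) j + (a : Fin 6 → ZMod 2) j := by
          have := congrFun (congrArg Subtype.val h) j
          simp only [hc, Pi.add_apply] at this
          rw [add_comm] at this
          simpa using this
        simpa using zcancel _ _ h3
      have hunion := (hf a b c hab hac hbc).mp (by
        funext j
        simpa [hc] using zself ((a : Fin 6 → ZMod 2) j) ((b : Fin 6 → ZMod 2) j))
      have hsub : ((f a : Finset (Fin 8)) ∪ (f b : Finset (Fin 8))).card ≤ 3 := by
        rw [← hunion]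
        exact Finset.card_le_card Finset.subset_union_left
      have hie := Finset.card_union_add_card_inter (f a : Finset (Fin 8)) (f b : Finset (Fin 8))
      rw [(f a).2, (f b).2] at hie
      rw [← Finset.card_pos]
      omega
    obtain ⟨i, hi⟩ := star_lemma T h2 (by omega) hint
    refine ⟨i, ?_⟩
    apply Finset.eq_of_subset_of_card_le
    · intro s hsT
      exact Finset.mem_filter.mpr ⟨Finset.mem_univ s, h2 s hsT, hi s hsT⟩
    · rw [starCard i, hTcard]
  · rintro ⟨i, hT⟩
    have h7 : H.card = 7 := by
      rw [← Finset.card_image_of_injective H hinj, hT, starCard]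
    refine ⟨h7, ?_⟩
    intro a ha b hb hab
    have hmem : ∀ x ∈ H, i ∈ (f x : Finset (Fin 8)) := by
      intro x hx
      have : (f x : Finset (Fin 8)) ∈ H.image (fun a => (f a : Finset (Fin 8))) :=
        Finset.mem_image_of_mem _ hx
      rw [hT] at this
      exact (Finset.mem_filter.mp this).2.2
    have hia := hmem a ha
    have hib := hmem b hb
    have hfne : (f a : Finset (Fin 8)) ≠ (f b : Finset (Fin 8)) := fun h => hab (hinj h)
    obtain ⟨x, hxi, hax⟩ := pair_other (f a).2 hia
    obtain ⟨y, hyi, hby⟩ := pair_other (f b).2 hib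
    have hxy : x ≠ y := by rintro rfl; exact hfne (hax.trans hby.symm)
    set c := f.symm ⟨{x, y}, Finset.card_pair hxy⟩ with hc
    have hfc : (f c : Finset (Fin 8)) = {x, y} := by rw [hc, Equiv.apply_symm_apply]
    have hinotu : i ∉ ({x, y} : Finset (Fin 8)) := by
      simp only [Finset.mem_insert, Finset.mem_singleton]
      rintro (rfl | rfl)
      · exact hxi rfl
      · exact hyi rfl
    have hca : a ≠ c := by
      intro h
      rw [← h, hax] at hfc
      exact hinotu (hfc ▸ Finset.mem_insert_self i {x})
    have hcb : b ≠ c := by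
      intro h
      rw [← h, hby] at hfc
      exact hinotu (hfc ▸ Finset.mem_insert_self i {y})
    have hunion : ((f a : Finset (Fin 8)) ∪ (f b : Finset (Fin 8)) ∪ (f c : Finset (Fin 8))).card = 3 := by
      rw [hax, hby, hfc]
      have : ({i, x} ∪ {i, y} ∪ {x, y} : Finset (Fin 8)) = {i, x, y} := by
        ext z
        simp only [Finset.mem_union, Finset.mem_insert, Finset.mem_singleton]
        tauto
      rw [this, Finset.card_insert_of_notMem hinotu, Finset.card_pair hxy]
    have hsum := (hf a b c hab hca hcb).mpr hunion
    have heq : (a : Fin 6 → ZMod 2) + (b : Fin 6 → ZMod 2) = (c : Fin 6 → ZMod 2) := by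
      funext j
      exact zsum _ _ _ (by simpa using congrFun hsum j)
    rw [heq]
    exact c.2.2
end

section
/- No three points of a Conwell heptad are collinear: if H is a Conwell heptad of the hyperbolic quadric of PG(5,2) and a, b, c ∈ H are pairwise distinct, then a + b + c ≠ 0. -/
/-- No three points of a Conwell heptad are collinear. -/
theorem conwell_heptad_no_three_collinear (H : Finset (Fin 6 → ZMod 2))
    (hH : IsConwellHeptad H) (a b c : Fin 6 → ZMod 2)
    (ha : a ∈ H) (hb : b ∈ H) (hc : c ∈ H)
    (hab : a ≠ b) (hac : a ≠ c) (hbc : b ≠ c) :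
    a + b + c ≠ 0 := by
  intro h0
  obtain ⟨hcard, hQ1, hQ2⟩ := hH
  -- c = a + b
  have hceq : c = a + b := by
    funext i
    have := congrFun h0 i
    simp only [Pi.add_apply, Pi.zero_apply] at this ⊢
    have two : (2 : ZMod 2) = 0 := by decide
    linear_combination this - (a i + b i) * two
  -- find a fourth point d
  have hsub : ({a, b, c} : Finset (Fin 6 → ZMod 2)) ⊆ H := by
    intro x hx
    simp only [Finset.mem_insert, Finset.mem_singleton] at hx
    rcases hx with rfl | rfl | rfl <;> assumption
  have hlt : (({a, b, c} : Finset (Fin 6 → ZMod 2))).card < H.card := by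
    have h3' : ({a, b, c} : Finset (Fin 6 → ZMod 2)).card ≤ 3 := by
      calc ({a, b, c} : Finset (Fin 6 → ZMod 2)).card
          ≤ ({b, c} : Finset (Fin 6 → ZMod 2)).card + 1 := Finset.card_insert_le _ _
        _ ≤ (({c} : Finset (Fin 6 → ZMod 2)).card + 1) + 1 := by
            gcongr; exact Finset.card_insert_le _ _
        _ = 3 := by simp
    omega
  have hss : ({a, b, c} : Finset (Fin 6 → ZMod 2)) ⊂ H := by
    refine ⟨hsub, fun h' => ?_⟩
    exact absurd (Finset.card_le_card h') (by omega)
  obtain ⟨d, hdH, hd⟩ := Finset.exists_of_ssubset hss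
  simp only [Finset.mem_insert, Finset.mem_singleton, not_or] at hd
  obtain ⟨hda, hdb, hdc⟩ := hd
  have h1 : Q (a + d) = 1 := hQ2 a ha d hdH (fun h => hda h.symm)
  have h2 : Q (b + d) = 1 := hQ2 b hb d hdH (fun h => hdb h.symm)
  have h3 : Q (c + d) = 1 := hQ2 c hc d hdH (fun h => hdc h.symm)
  have h4 : Q (a + b) = 1 := hQ2 a ha b hb hab
  have h5 : Q a = 1 := (hQ1 a ha).2
  have h6 : Q b = 1 := (hQ1 b hb).2
  have h7 : Q d = 1 := (hQ1 d hdH).2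
  subst hceq
  simp only [Q, Pi.add_apply] at h1 h2 h3 h4 h5 h6 h7
  have key : ∀ x0 x1 y0 y1 z0 z1 : ZMod 2,
      (x0+z0)*(x1+z1) + (y0+z0)*(y1+z1) + (x0+y0)*(x1+y1) + (x0+y0+z0)*(x1+y1+z1)
        = x0*x1 + y0*y1 + z0*z1 := by decide
  have : (0 : ZMod 2) = 1 := by
    linear_combination h1 + h2 + h3 + h4 - h5 - h6 - h7
      - key (a 0) (a 1) (b 0) (b 1) (d 0) (d 1)
      - key (a 2) (a 3) (b 2) (b 3) (d 2) (d 3)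
      - key (a 4) (a 5) (b 4) (b 5) (d 4) (d 5)
  exact absurd this (by decide)
end

section
/- Any set of off-quadric points of PG(5,2) in which every two distinct points are joined by an external line has at most 7 elements: if S is a set of nonzero vectors of (Fin 6 → ZMod 2), each with Q-value 1, such that Q(a + b) = 1 for all distinct a, b ∈ S, then the cardinality of S is at most 7. -/
/-- The polar form of `Q` as a linear functional in the first argument. -/
def Bf (b : Fin 6 → ZMod 2) : (Fin 6 → ZMod 2) →ₗ[ZMod 2] ZMod 2 where
  toFun v := v 0 * b 1 + v 1 * b 0 + v 2 * b 3 + v 3 * b 2 + v 4 * b 5 + v 5 * b 4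
  map_add' x y := by simp only [Pi.add_apply]; ring
  map_smul' c x := by simp only [Pi.smul_apply, smul_eq_mul, RingHom.id_apply]; ring

/-- Any set of off-quadric points of PG(5,2) in which every two distinct points are
joined by an external line has at most 7 elements. -/
theorem pairwise_external_set_card_le_seven (S : Finset (Fin 6 → ZMod 2))
    (hS : ∀ v ∈ S, v ≠ 0 ∧ Q v = 1)
    (hext : ∀ a ∈ S, ∀ b ∈ S, a ≠ b → Q (a + b) = 1) :
    S.card ≤ 7 := by
  classical
  have key : LinearIndependent (ZMod 2)
      (fun a : {x // x ∈ S} => ((a : Fin 6 → ZMod 2), (1 : ZMod 2))) := by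
    rw [Fintype.linearIndependent_iff]
    intro g hg
    by_contra hcon
    push_neg at hcon
    obtain ⟨j, hj⟩ := hcon
    have hone : ∀ x : ZMod 2, x ≠ 0 → x = 1 := by decide
    have hj1 : g j = 1 := hone _ hj
    have hfst : ∑ i, g i • (i : Fin 6 → ZMod 2) = 0 := by
      have := congrArg Prod.fst hg
      simpa [Prod.fst_sum] using this
    have hsnd : ∑ i, g i = 0 := by
      have := congrArg Prod.snd hg
      simpa [Prod.snd_sum, smul_eq_mul] using this
    have happ : ∑ i, g i * Bf (j : Fin 6 → ZMod 2) (i : Fin 6 → ZMod 2) = 0 := by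
      have := congrArg (Bf (j : Fin 6 → ZMod 2)) hfst
      simpa [map_sum, map_smul, smul_eq_mul] using this
    have hB : ∀ i : {x // x ∈ S},
        Bf (j : Fin 6 → ZMod 2) (i : Fin 6 → ZMod 2) = if i = j then 0 else 1 := by
      intro i
      by_cases h : i = j
      · subst h
        simp only [if_pos rfl, Bf, LinearMap.coe_mk, AddHom.coe_mk]
        ring_nf
        simp [show (2:ZMod 2) = 0 from rfl]
      · rw [if_neg h]
        have hne : (i : Fin 6 → ZMod 2) ≠ (j : Fin 6 → ZMod 2) :=
          fun hh => h (Subtype.ext hh)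
        have hq := hext _ i.2 _ j.2 hne
        have hqi := (hS _ i.2).2
        have hqj := (hS _ j.2).2
        have hpol : Bf (j : Fin 6 → ZMod 2) (i : Fin 6 → ZMod 2) =
            Q ((i : Fin 6 → ZMod 2) + (j : Fin 6 → ZMod 2)) +
              Q (i : Fin 6 → ZMod 2) + Q (j : Fin 6 → ZMod 2) := by
          simp only [Bf, Q, LinearMap.coe_mk, AddHom.coe_mk, Pi.add_apply]
          ring_nf
          simp [show (2:ZMod 2) = 0 from rfl]
        rw [hpol, hq, hqi, hqj]
        decide
    have hsum : ∑ i, g i * Bf (j : Fin 6 → ZMod 2) (i : Fin 6 → ZMod 2)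
        = (∑ i, g i) - g j := by
      have : ∀ i : {x // x ∈ S},
          g i * Bf (j : Fin 6 → ZMod 2) (i : Fin 6 → ZMod 2)
            = g i - (if i = j then g i else 0) := by
        intro i
        rw [hB i]
        split <;> ring
      rw [Finset.sum_congr rfl (fun i _ => this i), Finset.sum_sub_distrib,
        Finset.sum_ite_eq' Finset.univ j g, if_pos (Finset.mem_univ j)]
    rw [hsum, hsnd, hj1] at happ
    simp at happ
  have hcard := key.fintype_card_le_finrank
  have hrank : Module.finrank (ZMod 2) ((Fin 6 → ZMod 2) × ZMod 2) = 7 := by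
    simp [Module.finrank_prod]
  rw [hrank, Fintype.card_coe] at hcard
  exact hcard
end

section
/- For any Conwell heptad H and any off-quadric point v not in H, exactly one of the six external lines through v meets H (and the remaining five are disjoint from H): the number of 3-element sets L of nonzero vectors of (Fin 6 → ZMod 2), each with Q-value 1, summing to 0, with v ∈ L and L ∩ H ≠ ∅ is exactly 1. -/
def B (a b : Fin 6 → ZMod 2) : ZMod 2 :=
  a 0 * b 1 + a 1 * b 0 + a 2 * b 3 + a 3 * b 2 + a 4 * b 5 + a 5 * b 4

lemma QB (a b : Fin 6 → ZMod 2) : Q (a + b) = Q a + Q b + B a b := by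
  simp only [Q, B, Pi.add_apply]; ring

lemma add_self' (a : Fin 6 → ZMod 2) : a + a = 0 := by
  funext i
  show a i + a i = 0
  have h2 : (2 : ZMod 2) = 0 := rfl
  calc a i + a i = 2 * a i := by ring
  _ = 0 := by rw [h2]; ring

lemma addEqZero {a b : Fin 6 → ZMod 2} (h : a + b = 0) : a = b := by
  calc a = a + (b + b) := by rw [add_self', add_zero]
  _ = (a + b) + b := by ring
  _ = b := by rw [h, zero_add]

lemma B_self (a : Fin 6 → ZMod 2) : B a a = 0 := by
  have h2 : (2 : ZMod 2) = 0 := rfl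
  simp only [B]
  calc a 0 * a 1 + a 1 * a 0 + a 2 * a 3 + a 3 * a 2 + a 4 * a 5 + a 5 * a 4
      = 2 * (a 0 * a 1 + a 2 * a 3 + a 4 * a 5) := by ring
  _ = 0 := by rw [h2]; ring

lemma B_add_left (a b c : Fin 6 → ZMod 2) : B (a + b) c = B a c + B b c := by
  simp only [B, Pi.add_apply]; ring

lemma one_one : (1 : ZMod 2) + 1 = 0 := rfl

section Heptad
variable {H : Finset (Fin 6 → ZMod 2)} (hH : IsConwellHeptad H)
include hH

lemma heptad_B {a b : Fin 6 → ZMod 2} (ha : a ∈ H) (hb : b ∈ H) (hab : a ≠ b) :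
    B a b = 1 := by
  have h := hH.2.2 a ha b hb hab
  rw [QB, (hH.2.1 a ha).2, (hH.2.1 b hb).2, one_one, zero_add] at h
  exact h

lemma sum_notin {a b : Fin 6 → ZMod 2} (ha : a ∈ H) (hb : b ∈ H) (hab : a ≠ b) :
    a + b ∉ H := by
  intro hc
  have hca : a + b ≠ a := by
    intro h
    have : b = 0 := by
      calc b = (a + a) + b := by rw [add_self', zero_add]
      _ = a + (a + b) := by ring
      _ = a + a := by rw [h]
      _ = 0 := add_self' a
    exact (hH.2.1 b hb).1 this
  have hcb : a + b ≠ b := by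
    intro h
    have : a = 0 := by
      calc a = a + (b + b) := by rw [add_self', add_zero]
      _ = (a + b) + b := by ring
      _ = b + b := by rw [h]
      _ = 0 := add_self' b
    exact (hH.2.1 a ha).1 this
  have hns : ¬ H ⊆ ({a, b, a + b} : Finset (Fin 6 → ZMod 2)) := by
    intro hsub
    have := Finset.card_le_card hsub
    rw [hH.1] at this
    have h3 : ({a, b, a + b} : Finset (Fin 6 → ZMod 2)).card ≤ 3 := by
      apply (Finset.card_insert_le _ _).trans
      have h4 := Finset.card_insert_le b ({a + b} : Finset (Fin 6 → ZMod 2))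
      simp only [Finset.card_singleton] at h4
      omega
    omega
  obtain ⟨d, hd, hdne⟩ := Finset.not_subset.mp hns
  simp only [Finset.mem_insert, Finset.mem_singleton, not_or] at hdne
  obtain ⟨hda, hdb, hdc⟩ := hdne
  have h1 : B (a + b) d = 1 := heptad_B hH hc hd (fun h => hdc h.symm)
  rw [B_add_left, heptad_B hH ha hd (fun h => hda h.symm),
    heptad_B hH hb hd (fun h => hdb h.symm), one_one] at h1
  exact one_ne_zero h1.symm

lemma four_sum {a b c d : Fin 6 → ZMod 2} (ha : a ∈ H) (hb : b ∈ H) (hc : c ∈ H)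
    (hd : d ∈ H) (hab : a ≠ b) (hcd : c ≠ d) (hac : a ≠ c) (had : a ≠ d)
    (hbc : b ≠ c) (hbd : b ≠ d) : a + b ≠ c + d := by
  intro h
  have habc : a + b + c = d := by
    rw [h]
    calc c + d + c = d + (c + c) := by ring
    _ = d := by rw [add_self', add_zero]
  have hq : Q (a + b + c) = 0 := by
    rw [QB, hH.2.2 a ha b hb hab, (hH.2.1 c hc).2, B_add_left,
      heptad_B hH ha hc hac, heptad_B hH hb hc hbc, one_one, add_zero]
  rw [habc, (hH.2.1 d hd).2] at hq
  exact one_ne_zero hq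

end Heptad


/-- For any Conwell heptad `H` and any off-quadric point `v ∉ H`, exactly one of the six
external lines through `v` meets `H`. -/
theorem one_external_line_through_point_meets_heptad (H : Finset (Fin 6 → ZMod 2))
    (hH : IsConwellHeptad H) (v : Fin 6 → ZMod 2)
    (hv : v ≠ 0) (hQ : Q v = 1) (hvH : v ∉ H) :
    (Finset.univ.filter (fun L : Finset (Fin 6 → ZMod 2) =>
      v ∈ L ∧ L.card = 3 ∧ (∑ w ∈ L, w) = 0 ∧ (∀ w ∈ L, w ≠ 0 ∧ Q w = 1) ∧
        (L ∩ H).Nonempty)).card = 1 := by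
  classical
  -- Step 1: v is the sum of a unique pair from H; first, existence.
  obtain ⟨b, hb, c, hc, hbc, hvbc⟩ :
      ∃ b ∈ H, ∃ c ∈ H, b ≠ c ∧ b + c = v := by
    set P := H.powersetCard 2 with hP
    set f : Finset (Fin 6 → ZMod 2) → (Fin 6 → ZMod 2) := fun s => ∑ x ∈ s, x with hf
    set U := (Finset.univ.filter (fun x : Fin 6 → ZMod 2 => x ≠ 0 ∧ Q x = 1)) \ H with hU
    have hinj : Set.InjOn f P := by
      intro s hs t ht hst
      rw [Finset.mem_coe, hP, Finset.mem_powersetCard] at hs ht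
      obtain ⟨a, b, hab, rfl⟩ := Finset.card_eq_two.mp hs.2
      obtain ⟨c, d, hcd, rfl⟩ := Finset.card_eq_two.mp ht.2
      have haH := hs.1 (Finset.mem_insert_self _ _)
      have hbH := hs.1 (Finset.mem_insert_of_mem (Finset.mem_singleton_self _))
      have hcH := ht.1 (Finset.mem_insert_self _ _)
      have hdH := ht.1 (Finset.mem_insert_of_mem (Finset.mem_singleton_self _))
      rw [hf] at hst
      simp only [Finset.sum_pair hab, Finset.sum_pair hcd] at hst
      by_cases hac : a = c
      · subst hac
        have : b = d := add_left_cancel hst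
        rw [this]
      by_cases had : a = d
      · subst had
        have : b = c := by
          apply add_left_cancel (a := a)
          rw [hst]; ring
        rw [this]; exact Finset.pair_comm a c
      by_cases hbc : b = c
      · subst hbc
        exfalso
        have : a = d := by
          apply add_left_cancel (a := b)
          rw [add_comm b a, hst]
        exact had this
      by_cases hbd : b = d
      · subst hbd
        exfalso
        have : a = c := by
          apply add_left_cancel (a := b)
          rw [add_comm b a, hst, add_comm c b]
        exact hac this
      exact absurd hst (four_sum hH haH hbH hcH hdH hab hcd hac had hbc hbd)
    have hsub : P.image f ⊆ U := by
      intro x hx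
      rw [Finset.mem_image] at hx
      obtain ⟨s, hs, rfl⟩ := hx
      rw [hP, Finset.mem_powersetCard] at hs
      obtain ⟨a, b, hab, rfl⟩ := Finset.card_eq_two.mp hs.2
      have haH := hs.1 (Finset.mem_insert_self _ _)
      have hbH := hs.1 (Finset.mem_insert_of_mem (Finset.mem_singleton_self _))
      rw [hf]
      simp only [Finset.sum_pair hab]
      rw [hU, Finset.mem_sdiff, Finset.mem_filter]
      refine ⟨⟨Finset.mem_univ _, ?_, hH.2.2 a haH b hbH hab⟩, sum_notin hH haH hbH hab⟩
      intro h0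
      exact hab (addEqZero h0)
    have h28 : (Finset.univ.filter (fun x : Fin 6 → ZMod 2 => x ≠ 0 ∧ Q x = 1)).card = 28 := by
      decide
    have hHsub : H ⊆ Finset.univ.filter (fun x : Fin 6 → ZMod 2 => x ≠ 0 ∧ Q x = 1) := by
      intro x hx
      rw [Finset.mem_filter]
      exact ⟨Finset.mem_univ _, (hH.2.1 x hx).1, (hH.2.1 x hx).2⟩
    have hUcard : U.card = 21 := by
      rw [hU, Finset.card_sdiff_of_subset hHsub, h28, hH.1]
    have hPcard : (P.image f).card = 21 := by
      rw [Finset.card_image_of_injOn hinj, hP, Finset.card_powersetCard, hH.1]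
      rfl
    have heq : P.image f = U := Finset.eq_of_subset_of_card_le hsub (by omega)
    have hvU : v ∈ U := by
      rw [hU, Finset.mem_sdiff, Finset.mem_filter]
      exact ⟨⟨Finset.mem_univ _, hv, hQ⟩, hvH⟩
    rw [← heq, Finset.mem_image] at hvU
    obtain ⟨s, hs, hfs⟩ := hvU
    rw [hP, Finset.mem_powersetCard] at hs
    obtain ⟨a, b, hab, rfl⟩ := Finset.card_eq_two.mp hs.2
    refine ⟨a, hs.1 (Finset.mem_insert_self _ _), b,
      hs.1 (Finset.mem_insert_of_mem (Finset.mem_singleton_self _)), hab, ?_⟩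
    rw [hf] at hfs
    simpa [Finset.sum_pair hab] using hfs
  -- Key: for a ∈ H with Q (v + a) = 1, a = b or a = c.
  have key : ∀ a ∈ H, Q (v + a) = 1 → a = b ∨ a = c := by
    intro a haH hQa
    by_contra hcon
    push_neg at hcon
    obtain ⟨hnb, hnc⟩ := hcon
    have hBva : B v a = 0 := by
      rw [← hvbc, B_add_left, heptad_B hH hb haH (fun h => hnb h.symm),
        heptad_B hH hc haH (fun h => hnc h.symm), one_one]
    rw [QB, hQ, (hH.2.1 a haH).2, hBva, add_zero, one_one] at hQa
    exact one_ne_zero hQa.symm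
  have hvb : v ≠ b := fun h => hvH (h ▸ hb)
  have hvc : v ≠ c := fun h => hvH (h ▸ hc)
  have hvnbc : v ∉ ({b, c} : Finset (Fin 6 → ZMod 2)) := by
    simp [hvb, hvc]
  set L0 : Finset (Fin 6 → ZMod 2) := insert v {b, c} with hL0
  rw [Finset.card_eq_one]
  refine ⟨L0, ?_⟩
  rw [Finset.eq_singleton_iff_unique_mem]
  constructor
  · rw [Finset.mem_filter]
    refine ⟨Finset.mem_univ _, Finset.mem_insert_self _ _, ?_, ?_, ?_, ?_⟩
    · rw [hL0, Finset.card_insert_of_notMem hvnbc, Finset.card_pair hbc]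
    · rw [hL0, Finset.sum_insert hvnbc, Finset.sum_pair hbc, hvbc, add_self']
    · intro w hw
      rw [hL0, Finset.mem_insert, Finset.mem_insert, Finset.mem_singleton] at hw
      rcases hw with rfl | rfl | rfl
      · exact ⟨hv, hQ⟩
      · exact hH.2.1 _ hb
      · exact hH.2.1 _ hc
    · exact ⟨b, Finset.mem_inter.mpr ⟨by simp [hL0], hb⟩⟩
  · intro L hL
    rw [Finset.mem_filter] at hL
    obtain ⟨-, hvL, hc3, hsum, hprops, hmeet⟩ := hL
    obtain ⟨x, hx⟩ := hmeet
    rw [Finset.mem_inter] at hx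
    obtain ⟨hxL, hxH⟩ := hx
    have hxv : x ≠ v := fun h => hvH (h ▸ hxH)
    -- L = {v, x, y} for the third element y
    have hx' : x ∈ L.erase v := Finset.mem_erase.mpr ⟨hxv, hxL⟩
    have hcard2 : ((L.erase v).erase x).card = 1 := by
      rw [Finset.card_erase_of_mem hx', Finset.card_erase_of_mem hvL, hc3]
    obtain ⟨y, hy⟩ := Finset.card_eq_one.mp hcard2
    have hyx : y ≠ x := by
      have : y ∈ (L.erase v).erase x := hy ▸ Finset.mem_singleton_self y
      exact (Finset.mem_erase.mp this).1
    have hyv : y ≠ v := by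
      have : y ∈ (L.erase v).erase x := hy ▸ Finset.mem_singleton_self y
      exact (Finset.mem_erase.mp ((Finset.mem_erase.mp this).2)).1
    have hLeq : L = insert v (insert x {y}) := by
      rw [← hy, Finset.insert_erase hx', Finset.insert_erase hvL]
    have hvnxy : v ∉ (insert x {y} : Finset (Fin 6 → ZMod 2)) := by
      simp [Ne.symm hxv, Ne.symm hyv]
    have hxny : x ∉ ({y} : Finset (Fin 6 → ZMod 2)) := by simp [Ne.symm hyx]
    have hsum' : v + (x + y) = 0 := by
      rw [hLeq] at hsum
      rw [Finset.sum_insert hvnxy, Finset.sum_insert hxny, Finset.sum_singleton] at hsum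
      exact hsum
    have hyvx : y = v + x := by
      have : (v + x) + y = 0 := by rw [← hsum']; ring
      exact (addEqZero this).symm
    have hQy : Q (v + x) = 1 := by
      rw [← hyvx]
      exact (hprops y (hLeq ▸ by simp)).2
    rcases key x hxH hQy with hxb | hxc
    · have hyc : y = c := by
        rw [hyvx, hxb, ← hvbc]
        calc b + c + b = c + (b + b) := by ring
        _ = c := by rw [add_self', add_zero]
      rw [hLeq, hxb, hyc, hL0]
    · have hyb : y = b := by
        rw [hyvx, hxc, ← hvbc]
        calc b + c + c = b + (c + c) := by ring
        _ = b := by rw [add_self', add_zero]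
      rw [hLeq, hxc, hyb, hL0, Finset.pair_comm]
end
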